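/- arXiv:math/9512228 — 2 statements merged into one kernel-verified Lean document; each statement's English description precedes it below -/
import Mathlib

section
/- Let α ∈ (0,1) be irrational, ℓ* ∈ ℕ, and let ζ > 0 be such that every rigid pair (H₀,H₁) with 1 ≤ |V(H₁)∖V(H₀)| ≤ ℓ* and type (v,e) satisfies v − αe ≤ −ζ. Fix ε with 0 < ε < ζ. For a graph G on [n] define P₀(G) = ∅ and P_{j+1}(G) = P_j(G) ∪ ⋃{ H ⊆ [n] : P_j(G) ⊆ H, 1 ≤ |H∖P_j(G)| ≤ ℓ*, and (G↾P_j(G), G↾H) is rigid }, and let P(G) = P_n(G). Then there exists ξ > 0 such that for all sufficiently large n, the probability that |P(G(n,n^{−α}))| > n^{ε} is at most e^{−n^{ξ}}. -/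
open FirstOrder Filter Finset Asymptotics
open scoped Classical

namespace RandomGraphPaper

/-- The set of potential (non-loop) edges on the vertex set `Fin n` (representing `[n]`). -/
def allEdges (n : ℕ) : Finset (Sym2 (Fin n)) := Finset.univ.filter (fun e => ¬ e.IsDiag)

/-- The probability that the Erdős–Rényi random graph `G(n,p)` satisfies the predicate `A`:
each of the potential edges is present independently with probability `p`, so a fixed
edge set `E` occurs with probability `p^|E| * (1-p)^(C(n,2)-|E|)`. -/
noncomputable def prob (n : ℕ) (p : ℝ) (A : SimpleGraph (Fin n) → Prop) : ℝ :=
  ∑ E ∈ (allEdges n).powerset,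
    if A (SimpleGraph.fromEdgeSet ↑E) then
      p ^ E.card * (1 - p) ^ ((allEdges n).card - E.card) else 0

/-- The probability that the random graph `G_{n,p}[G*_Q]` (whose restriction to `Q` is the
fixed graph `GQ`, with every other potential edge present independently with probability
`p`) satisfies the predicate `A`. -/
noncomputable def probQ (n : ℕ) (p : ℝ) (Q : Finset (Fin n)) (GQ : SimpleGraph (Fin n))
    (A : SimpleGraph (Fin n) → Prop) : ℝ :=
  ∑ E ∈ ((allEdges n) \ Q.sym2).powerset,
    if A (SimpleGraph.fromEdgeSet (↑E ∪ GQ.edgeSet)) then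
      p ^ E.card * (1 - p) ^ (((allEdges n) \ Q.sym2).card - E.card) else 0

/-- Satisfaction of a first-order sentence in the language of graphs by a simple graph. -/
def SatG {V : Type*} (G : SimpleGraph V) (ψ : Language.graph.Sentence) : Prop :=
  @FirstOrder.Language.Sentence.Realize Language.graph V G.structure ψ

variable {V : Type*} [Fintype V] [DecidableEq V]

/-- The `v` of the type over `Q` of the pair of induced subgraphs on `V0 ⊆ V1`:
`v = |V1 ∖ V0 ∖ Q|`. -/
def vType (Q V0 V1 : Finset V) : ℕ := ((V1 \ V0) \ Q).card

/-- The `e` of the type over `Q` of the pair `(H↾V0 , H↾V1)`: the number of pairs that are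
edges of `H` or of `GQ`, with both endpoints in `V1 ∪ Q` but not both in `V0 ∪ Q`. -/
noncomputable def eType (Q : Finset V) (GQ H : SimpleGraph V) (V0 V1 : Finset V) : ℕ :=
  (((V1 ∪ Q).sym2).filter
    (fun p => (p ∈ H.edgeSet ∨ p ∈ GQ.edgeSet) ∧ p ∉ (V0 ∪ Q).sym2)).card

/-- `(H↾V0, H↾V1)` is dense over `Q`: `v - α e < 0`. -/
noncomputable def DenseQ (α : ℝ) (Q : Finset V) (GQ H : SimpleGraph V) (V0 V1 : Finset V) :
    Prop :=
  (vType Q V0 V1 : ℝ) - α * eType Q GQ H V0 V1 < 0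

/-- `(H↾V0, H↾V1)` is sparse over `Q`: `v - α e > 0`. -/
noncomputable def SparseQ (α : ℝ) (Q : Finset V) (GQ H : SimpleGraph V) (V0 V1 : Finset V) :
    Prop :=
  0 < (vType Q V0 V1 : ℝ) - α * eType Q GQ H V0 V1

/-- `(H↾V0, H↾V1)` is safe over `Q`: every proper subextension is sparse over `Q`. -/
noncomputable def SafeQ (α : ℝ) (Q : Finset V) (GQ H : SimpleGraph V) (V0 V1 : Finset V) :
    Prop :=
  ∀ S : Finset V, V0 ⊆ S → S ⊆ V1 → V0 ≠ S → SparseQ α Q GQ H V0 S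

/-- `(H↾V0, H↾V1)` is rigid over `Q`: `(H↾S, H↾V1)` is dense over `Q` whenever
`V0 ⊆ S ⊊ V1`. -/
noncomputable def RigidQ (α : ℝ) (Q : Finset V) (GQ H : SimpleGraph V) (V0 V1 : Finset V) :
    Prop :=
  ∀ S : Finset V, V0 ⊆ S → S ⊆ V1 → S ≠ V1 → DenseQ α Q GQ H S V1

/-- The absolute (`Q = ∅`) notion: the pair of induced subgraphs `(H↾V0, H↾V1)` is rigid. -/
noncomputable def Rigid (α : ℝ) (H : SimpleGraph V) (V0 V1 : Finset V) : Prop :=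
  RigidQ α ∅ ⊥ H V0 V1

/-- One step of the closure iteration:
`Y ↦ Y ∪ ⋃ {H : Y ⊆ H, 1 ≤ |H∖Y| ≤ ℓ, (G↾Y,G↾H) rigid}`. -/
noncomputable def clStep (α : ℝ) (ℓ : ℕ) (G : SimpleGraph V) (Y : Finset V) : Finset V :=
  Y ∪ Finset.univ.filter (fun x => ∃ H : Finset V,
    Y ⊆ H ∧ 1 ≤ (H \ Y).card ∧ (H \ Y).card ≤ ℓ ∧ Rigid α G Y H ∧ x ∈ H)

/-- The closure `cl_ℓ(X;G)`, obtained by iterating the closure step `|V|` times. -/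
noncomputable def cl (α : ℝ) (ℓ : ℕ) (G : SimpleGraph V) (X : Finset V) : Finset V :=
  (clStep α ℓ G)^[Fintype.card V] X

/-- `N(f,H₀,H₁)` in `G`: the number of maps `g : V1 → [n]` extending `f` and sending every
edge of `H` (within `V1`) with at least one endpoint outside `V0` to an edge of `G`. -/
noncomputable def NExt {n : ℕ} (G H : SimpleGraph (Fin n)) (V0 V1 : Finset (Fin n))
    (f : Fin n → Fin n) : ℕ :=
  Finset.card (Finset.univ.filter (fun g : ↥V1 → Fin n =>
    (∀ x : ↥V1, (x : Fin n) ∈ V0 → g x = f x) ∧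
    (∀ x y : ↥V1, H.Adj x y → ¬((x : Fin n) ∈ V0 ∧ (y : Fin n) ∈ V0) → G.Adj (g x) (g y))))

/-- Condition `⊗¹_ℓ` for the graph `G` relative to `(Q, GQ)`: every safe pair over `Q`
already realized in `G` over `V0` has a (closure-respecting) generic extension in `G`. -/
noncomputable def Otimes1 {n : ℕ} (α : ℝ) (ℓ : ℕ) (Q : Finset (Fin n))
    (GQ G : SimpleGraph (Fin n)) : Prop :=
  ∀ (V0 V1 : Finset (Fin n)) (H : SimpleGraph (Fin n)),
    Q ⊆ V0 → V0 ⊆ V1 →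
    (∀ x y, H.Adj x y → x ∈ V1 ∧ y ∈ V1) →
    (V1 \ Q).card ≤ ℓ →
    SafeQ α Q GQ H V0 V1 →
    (∀ x y, H.Adj x y → x ∈ V0 → y ∈ V0 → G.Adj x y) →
    ∃ g : Fin n → Fin n,
      (∀ x ∈ V0, g x = x) ∧
      (∀ x y, H.Adj x y → ¬(x ∈ V0 ∧ y ∈ V0) → G.Adj (g x) (g y)) ∧
      cl α ℓ G (V1.image g) = V1.image g ∪ cl α ℓ G V0

/-- Condition `⊗²_ℓ` for the graph `G` relative to `(Q, GQ)`: no rigid extension of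
`H₀ = G*_Q` with at most `ℓ` new vertices embeds into `G` over the identity on `Q`. -/
noncomputable def Otimes2 {n : ℕ} (α : ℝ) (ℓ : ℕ) (Q : Finset (Fin n))
    (GQ G : SimpleGraph (Fin n)) : Prop :=
  ¬ ∃ (V1 : Finset (Fin n)) (H : SimpleGraph (Fin n)) (g : Fin n → Fin n),
      Q ⊆ V1 ∧ V1 ≠ Q ∧
      (∀ x y, H.Adj x y → x ∈ V1 ∧ y ∈ V1) ∧
      (∀ x ∈ Q, ∀ y ∈ Q, (H.Adj x y ↔ GQ.Adj x y)) ∧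
      (V1 \ Q).card ≤ ℓ ∧
      RigidQ α Q GQ H Q V1 ∧
      (∀ x ∈ Q, g x = x) ∧
      (∀ x y, H.Adj x y → ¬(x ∈ Q ∧ y ∈ Q) → G.Adj (g x) (g y))

/-- The type of relation symbols of the vocabulary `τ = {=,Q,R}`:
a unary symbol `Q` and a binary symbol `R`. -/
inductive tauRel : ℕ → Type
  | q : tauRel 1
  | rel : tauRel 2

/-- The vocabulary `τ = {=,Q,R}` (equality is built in). -/
def tau : Language := ⟨fun _ => Empty, tauRel⟩

/-- The `τ`-structure with domain `M`, unary predicate `Qp` and binary relation `Rp`. -/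
def tauStruct (M : Type*) (Qp : M → Prop) (Rp : M → M → Prop) : tau.Structure M where
  funMap := fun f _ => Empty.elim f
  RelMap := fun r x =>
    match r with
    | .q => Qp (x 0)
    | .rel => Rp (x 0) (x 1)

/-- Realization of a `τ`-formula in the `τ`-structure `(M, Qp, Rp)` at an assignment `v`. -/
def tauRealize {M : Type*} (Qp : M → Prop) (Rp : M → M → Prop) {m : ℕ}
    (θ : tau.Formula (Fin m)) (v : Fin m → M) : Prop :=
  @FirstOrder.Language.Formula.Realize tau M (tauStruct M Qp Rp) _ θ v

/-- Satisfaction of a `τ`-sentence in the `τ`-structure `(M, Qp, Rp)`. -/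
def tauSat (M : Type*) (Qp : M → Prop) (Rp : M → M → Prop) (θ : tau.Sentence) : Prop :=
  @FirstOrder.Language.Sentence.Realize tau M (tauStruct M Qp Rp) θ

/-- The quantifier depth of a first-order formula: atomic formulas have depth `0`,
connectives take the maximum, and a quantifier adds one. -/
def qdepth {L : Language} {α : Type*} : ∀ {k : ℕ}, L.BoundedFormula α k → ℕ
  | _, .falsum => 0
  | _, .equal _ _ => 0
  | _, .rel _ _ => 0
  | _, .imp φ₁ φ₂ => max (qdepth φ₁) (qdepth φ₂)
  | _, .all φ => qdepth φ + 1

/-- The restriction `G↾Q` of a graph to a set of vertices (keeping the ambient vertex type). -/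
def restrictG {n : ℕ} (G : SimpleGraph (Fin n)) (Q : Finset (Fin n)) : SimpleGraph (Fin n) where
  Adj x y := G.Adj x y ∧ x ∈ Q ∧ y ∈ Q
  symm := ⟨fun _ _ ⟨h, hx, hy⟩ => ⟨h.symm, hy, hx⟩⟩
  loopless := ⟨fun _ ⟨h, _⟩ => G.irrefl h⟩

set_option linter.unusedSectionVars false

/-- binomial identity -/
lemma sum_pow_weight {β : Type*} [DecidableEq β] (p q : ℝ) (S : Finset β) :
    ∑ E ∈ S.powerset, p ^ E.card * q ^ (S.card - E.card) = (p + q) ^ S.card := by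
  classical
  induction S using Finset.induction_on with
  | empty => simp
  | @insert a S ha ih =>
    rw [Finset.powerset_insert, Finset.sum_union, Finset.sum_image]
    · have h1 : ∑ E ∈ S.powerset, p ^ E.card * q ^ ((insert a S).card - E.card)
          = q * ∑ E ∈ S.powerset, p ^ E.card * q ^ (S.card - E.card) := by
        rw [Finset.mul_sum]
        refine Finset.sum_congr rfl (fun E hE => ?_)
        have hc : E.card ≤ S.card := Finset.card_le_card (Finset.mem_powerset.1 hE)
        rw [Finset.card_insert_of_notMem ha, Nat.succ_sub hc, pow_succ]
        ring
      have h2 : ∑ E ∈ S.powerset, p ^ (insert a E).card * q ^ ((insert a S).card - (insert a E).card)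
          = p * ∑ E ∈ S.powerset, p ^ E.card * q ^ (S.card - E.card) := by
        rw [Finset.mul_sum]
        refine Finset.sum_congr rfl (fun E hE => ?_)
        have haE : a ∉ E := fun h => ha (Finset.mem_powerset.1 hE h)
        rw [Finset.card_insert_of_notMem haE, Finset.card_insert_of_notMem ha,
          Nat.succ_sub_succ, pow_succ]
        ring
      rw [h1, h2, ih, Finset.card_insert_of_notMem ha, pow_succ]
      ring
    · intro x hx y hy hxy
      have hax : a ∉ x := fun h => ha (Finset.mem_powerset.1 hx h)
      have hay : a ∉ y := fun h => ha (Finset.mem_powerset.1 hy h)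
      have : (insert a x).erase a = (insert a y).erase a := by rw [hxy]
      rwa [Finset.erase_insert hax, Finset.erase_insert hay] at this
    · rw [Finset.disjoint_left]
      intro E hE hE'
      obtain ⟨x, hx, rfl⟩ := Finset.mem_image.1 hE'
      exact ha (Finset.mem_powerset.1 hE (Finset.mem_insert_self a x))

lemma prob_union_bound {n : ℕ} {p : ℝ} (hp0 : 0 ≤ p) (hp1 : p ≤ 1)
    {ι : Type*} (I : Finset ι) (A : SimpleGraph (Fin n) → Prop)
    (B : ι → SimpleGraph (Fin n) → Prop)
    (hcov : ∀ G, A G → ∃ i ∈ I, B i G) :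
    prob n p A ≤ ∑ i ∈ I, prob n p (B i) := by
  unfold prob
  have hw : ∀ E : Finset (Sym2 (Fin n)),
      0 ≤ p ^ E.card * (1 - p) ^ ((allEdges n).card - E.card) := by
    intro E
    exact mul_nonneg (pow_nonneg hp0 _) (pow_nonneg (by linarith) _)
  calc ∑ E ∈ (allEdges n).powerset,
        (if A (SimpleGraph.fromEdgeSet ↑E) then
          p ^ E.card * (1 - p) ^ ((allEdges n).card - E.card) else 0)
      ≤ ∑ E ∈ (allEdges n).powerset, ∑ i ∈ I,
        (if B i (SimpleGraph.fromEdgeSet ↑E) then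
          p ^ E.card * (1 - p) ^ ((allEdges n).card - E.card) else 0) := by
        refine Finset.sum_le_sum (fun E hE => ?_)
        by_cases hA : A (SimpleGraph.fromEdgeSet (E : Set (Sym2 (Fin n))))
        · rw [if_pos hA]
          obtain ⟨i, hiI, hiB⟩ := hcov _ hA
          have := Finset.single_le_sum
            (f := fun i => (if B i (SimpleGraph.fromEdgeSet (E : Set (Sym2 (Fin n)))) then
              p ^ E.card * (1 - p) ^ ((allEdges n).card - E.card) else 0))
            (fun i _ => by by_cases h : B i (SimpleGraph.fromEdgeSet (E : Set (Sym2 (Fin n)))) <;>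
              simp [h, hw E]) hiI
          simpa [hiB] using this
        · rw [if_neg hA]
          refine Finset.sum_nonneg (fun i _ => ?_)
          by_cases h : B i (SimpleGraph.fromEdgeSet (E : Set (Sym2 (Fin n)))) <;> simp [h, hw E]
    _ = _ := Finset.sum_comm

lemma prob_edges_eq {n : ℕ} (p : ℝ) (F : Finset (Sym2 (Fin n))) (hF : F ⊆ allEdges n) :
    prob n p (fun G => ∀ e ∈ F, e ∈ G.edgeSet) = p ^ F.card := by
  classical
  unfold prob
  set M := (allEdges n).card with hM
  have key : ∀ E ∈ (allEdges n).powerset,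
      ((∀ e ∈ F, e ∈ (SimpleGraph.fromEdgeSet (E : Set (Sym2 (Fin n)))).edgeSet) ↔ F ⊆ E) := by
    intro E _
    rw [SimpleGraph.edgeSet_fromEdgeSet]
    constructor
    · intro h e he
      exact_mod_cast (h e he).1
    · intro h e he
      refine ⟨by exact_mod_cast h he, ?_⟩
      have := Finset.mem_filter.1 (hF he)
      exact this.2
  beta_reduce
  trans (∑ E ∈ (allEdges n).powerset,
      if F ⊆ E then p ^ E.card * (1 - p) ^ (M - E.card) else 0)
  · exact Finset.sum_congr rfl (fun E hE => by simp only [key E hE])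
  rw [← Finset.sum_filter]
  have hbij : ∑ E ∈ (allEdges n).powerset.filter (fun E => F ⊆ E),
      p ^ E.card * (1 - p) ^ (M - E.card)
      = ∑ D ∈ (allEdges n \ F).powerset,
        p ^ (F.card + D.card) * (1 - p) ^ ((allEdges n \ F).card - D.card) := by
    refine Finset.sum_nbij' (fun E => E \ F) (fun D => F ∪ D) ?_ ?_ ?_ ?_ ?_
    · intro E hE
      rw [Finset.mem_filter, Finset.mem_powerset] at hE
      rw [Finset.mem_powerset]
      exact Finset.sdiff_subset_sdiff hE.1 (Finset.Subset.refl F)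
    · intro D hD
      rw [Finset.mem_powerset] at hD
      rw [Finset.mem_filter, Finset.mem_powerset]
      exact ⟨Finset.union_subset hF (hD.trans Finset.sdiff_subset), Finset.subset_union_left⟩
    · intro E hE
      rw [Finset.mem_filter] at hE
      exact Finset.union_sdiff_of_subset hE.2
    · intro D hD
      rw [Finset.mem_powerset] at hD
      beta_reduce
      rw [Finset.union_sdiff_cancel_left]
      exact Finset.disjoint_left.2 (fun a haF haD => (Finset.mem_sdiff.1 (hD haD)).2 haF)
    · intro E hE
      rw [Finset.mem_filter, Finset.mem_powerset] at hE
      have h1 : E.card = F.card + (E \ F).card := by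
        rw [← Finset.card_sdiff_add_card_eq_card hE.2]; omega
      have h2 : M - E.card = (allEdges n \ F).card - (E \ F).card := by
        rw [Finset.card_sdiff_of_subset hF, h1, hM]
        have := Finset.card_le_card hE.1
        omega
      beta_reduce
      rw [← h1, h2]
  rw [hbij]
  have : ∀ D ∈ (allEdges n \ F).powerset,
      p ^ (F.card + D.card) * (1 - p) ^ ((allEdges n \ F).card - D.card)
      = p ^ F.card * (p ^ D.card * (1 - p) ^ ((allEdges n \ F).card - D.card)) := by
    intro D _
    rw [pow_add]; ring
  rw [Finset.sum_congr rfl this, ← Finset.mul_sum, sum_pow_weight]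
  norm_num


section Det

variable {W : Type} [Fintype W] [DecidableEq W]

/-- number of edges of `G` inside `T`. -/
noncomputable def myEdges (G : SimpleGraph W) (T : Finset W) : ℕ :=
  (T.sym2.filter (fun p => p ∈ G.edgeSet)).card

lemma eType_empty_eq (G : SimpleGraph W) (V0 V1 : Finset W) :
    eType ∅ ⊥ G V0 V1
      = (V1.sym2.filter (fun p => p ∈ G.edgeSet ∧ p ∉ V0.sym2)).card := by
  unfold eType
  simp [Finset.union_empty, SimpleGraph.edgeSet_bot]

lemma myEdges_split (G : SimpleGraph W) {T U : Finset W} (h : T ⊆ U) :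
    myEdges G U = myEdges G T
      + (U.sym2.filter (fun p => p ∈ G.edgeSet ∧ p ∉ T.sym2)).card := by
  classical
  have h1 : (U.sym2.filter (fun p => p ∈ G.edgeSet)).filter (fun p => p ∈ T.sym2)
      = T.sym2.filter (fun p => p ∈ G.edgeSet) := by
    ext p
    simp only [Finset.mem_filter]
    constructor
    · rintro ⟨⟨_, he⟩, ht⟩; exact ⟨ht, he⟩
    · rintro ⟨ht, he⟩; exact ⟨⟨Finset.sym2_mono h ht, he⟩, ht⟩
  have h2 : (U.sym2.filter (fun p => p ∈ G.edgeSet)).filter (fun p => ¬ p ∈ T.sym2)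
      = U.sym2.filter (fun p => p ∈ G.edgeSet ∧ p ∉ T.sym2) := by
    rw [Finset.filter_filter]
  have h3 := Finset.card_filter_add_card_filter_not
    (s := U.sym2.filter (fun p => p ∈ G.edgeSet)) (p := fun p => p ∈ T.sym2)
  have e1 := congrArg Finset.card h1
  have e2 := congrArg Finset.card h2
  unfold myEdges
  omega

/-- restriction of a graph to a finite set -/
def restr (G : SimpleGraph W) (U : Finset W) : SimpleGraph W where
  Adj x y := G.Adj x y ∧ x ∈ U ∧ y ∈ U
  symm := ⟨fun _ _ ⟨hxy, hx, hy⟩ => ⟨hxy.symm, hy, hx⟩⟩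
  loopless := ⟨fun _ ⟨h, _⟩ => G.irrefl h⟩

lemma restr_mem_edgeSet (G : SimpleGraph W) (U : Finset W) {p : Sym2 W} (hp : p ∈ U.sym2) :
    p ∈ (restr G U).edgeSet ↔ p ∈ G.edgeSet := by
  induction p using Sym2.ind with
  | _ x y =>
    rw [Finset.mk_mem_sym2_iff] at hp
    simp only [SimpleGraph.mem_edgeSet]
    change (G.Adj x y ∧ x ∈ U ∧ y ∈ U) ↔ G.Adj x y
    tauto

lemma eType_restr (G : SimpleGraph W) (U S : Finset W) :
    eType ∅ ⊥ (restr G U) S U = eType ∅ ⊥ G S U := by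
  rw [eType_empty_eq, eType_empty_eq]
  congr 1
  apply Finset.filter_congr
  intro p hp
  rw [restr_mem_edgeSet G U hp]

lemma rigid_restr (α : ℝ) (G : SimpleGraph W) (U T : Finset W)
    (h : Rigid α G T U) : Rigid α (restr G U) T U := by
  intro S h1 h2 h3
  have := h S h1 h2 h3
  unfold DenseQ at this ⊢
  rwa [eType_restr]

lemma rigid_base_change {α : ℝ} (hα : 0 ≤ α) (G : SimpleGraph W) {Y H T : Finset W}
    (hYH : Y ⊆ H) (hYT : Y ⊆ T) (hR : Rigid α G Y H) : Rigid α G T (T ∪ H) := by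
  intro S hTS hSU hne
  have hYS : Y ⊆ S := hYT.trans hTS
  have hSH : S ∩ H ≠ H := by
    intro hEq
    apply hne
    refine Finset.Subset.antisymm hSU (Finset.union_subset hTS ?_)
    rw [← hEq]
    exact Finset.inter_subset_left
  have hdense := hR (S ∩ H) (Finset.subset_inter hYS hYH) Finset.inter_subset_right hSH
  unfold DenseQ vType at hdense ⊢
  have hv : ((T ∪ H) \ S) \ ∅ = (H \ (S ∩ H)) \ ∅ := by
    rw [Finset.sdiff_empty, Finset.sdiff_empty]
    ext x
    simp only [Finset.mem_sdiff, Finset.mem_union, Finset.mem_inter]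
    constructor
    · rintro ⟨hx, hxS⟩
      refine ⟨?_, fun h => hxS h.1⟩
      rcases hx with hx | hx
      · exact absurd (hTS hx) hxS
      · exact hx
    · rintro ⟨hxH, hx⟩
      exact ⟨Or.inr hxH, fun hS => hx ⟨hS, hxH⟩⟩
  have he : eType ∅ ⊥ G (S ∩ H) H ≤ eType ∅ ⊥ G S (T ∪ H) := by
    rw [eType_empty_eq, eType_empty_eq]
    apply Finset.card_le_card
    intro p hp
    rw [Finset.mem_filter] at hp ⊢
    obtain ⟨hpH, hpe, hpS⟩ := hp
    refine ⟨Finset.sym2_mono Finset.subset_union_right hpH, hpe, fun hmem => hpS ?_⟩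
    induction p using Sym2.ind with
    | _ x y =>
      rw [Finset.mk_mem_sym2_iff] at *
      exact ⟨Finset.mem_inter.2 ⟨hmem.1, hpH.1⟩, Finset.mem_inter.2 ⟨hmem.2, hpH.2⟩⟩
  rw [hv]
  have : α * (eType ∅ ⊥ G (S ∩ H) H : ℝ) ≤ α * eType ∅ ⊥ G S (T ∪ H) :=
    mul_le_mul_of_nonneg_left (by exact_mod_cast he) hα
  linarith

lemma step_bound {α ζ : ℝ} (hα : 0 ≤ α) {ℓ : ℕ}
    (hrigid : ∀ (V : Type) [Fintype V] [DecidableEq V] (H : SimpleGraph V)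
      (V0 V1 : Finset V),
      V0 ⊆ V1 →
      (∀ x y, H.Adj x y → x ∈ V1 ∧ y ∈ V1) →
      1 ≤ (V1 \ V0).card → (V1 \ V0).card ≤ ℓ →
      Rigid α H V0 V1 →
      ((V1 \ V0).card : ℝ) - α * eType ∅ ⊥ H V0 V1 ≤ -ζ)
    (G : SimpleGraph W) {Y H T : Finset W} (hYH : Y ⊆ H) (hYT : Y ⊆ T)
    (hcard : (H \ Y).card ≤ ℓ) (hR : Rigid α G Y H) (hnot : ¬ H ⊆ T) :
    1 ≤ ((T ∪ H) \ T).card ∧ ((T ∪ H) \ T).card ≤ ℓ ∧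
      ((((T ∪ H) \ T).card : ℝ) + ζ ≤
        α * (((T ∪ H).sym2.filter (fun p => p ∈ G.edgeSet ∧ p ∉ T.sym2)).card)) := by
  classical
  have hUT : (T ∪ H) \ T = H \ T := Finset.union_sdiff_left T H
  have h1 : 1 ≤ ((T ∪ H) \ T).card := by
    rw [hUT]
    obtain ⟨x, hxH, hxT⟩ := Finset.not_subset.1 hnot
    have : x ∈ H \ T := Finset.mem_sdiff.2 ⟨hxH, hxT⟩
    exact Finset.card_pos.2 ⟨x, this⟩
  have h2 : ((T ∪ H) \ T).card ≤ ℓ := by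
    rw [hUT]
    exact le_trans (Finset.card_le_card
      (Finset.sdiff_subset_sdiff (Finset.Subset.refl H) hYT)) hcard
  have hRig : Rigid α G T (T ∪ H) := rigid_base_change hα G hYH hYT hR
  have hRig' : Rigid α (restr G (T ∪ H)) T (T ∪ H) := rigid_restr α G _ T hRig
  have hadj : ∀ x y, (restr G (T ∪ H)).Adj x y → x ∈ T ∪ H ∧ y ∈ T ∪ H := by
    intro x y h
    exact ⟨h.2.1, h.2.2⟩
  have := hrigid W (restr G (T ∪ H)) T (T ∪ H) Finset.subset_union_left hadj h1 h2 hRig'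
  rw [eType_restr, eType_empty_eq] at this
  refine ⟨h1, h2, by linarith⟩

lemma det_lemma {α ζ : ℝ} (hα : 0 ≤ α) {ℓ : ℕ}
    (hrigid : ∀ (V : Type) [Fintype V] [DecidableEq V] (H : SimpleGraph V)
      (V0 V1 : Finset V),
      V0 ⊆ V1 →
      (∀ x y, H.Adj x y → x ∈ V1 ∧ y ∈ V1) →
      1 ≤ (V1 \ V0).card → (V1 \ V0).card ≤ ℓ →
      Rigid α H V0 V1 →
      ((V1 \ V0).card : ℝ) - α * eType ∅ ⊥ H V0 V1 ≤ -ζ)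
    (G : SimpleGraph W) (t : ℕ) (hbig : t < (cl α ℓ G ∅).card) :
    ∃ T : Finset W, t < T.card ∧ T.card ≤ t + ℓ ∧
      ∃ k : ℕ, T.card ≤ ℓ * k ∧ ((T.card : ℝ) ≤ α * myEdges G T - ζ * k) := by
  classical
  set R : Finset W → Prop := fun T => ∃ k : ℕ,
    T.card ≤ ℓ * k ∧ ((T.card : ℝ) ≤ α * myEdges G T - ζ * k) with hRdef
  have absorb : ∀ (F Y T : Finset W), R T → Y ⊆ T → T.card ≤ t →
      (∀ x ∈ F, x ∈ clStep α ℓ G Y) →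
      (∃ T', R T' ∧ t < T'.card ∧ T'.card ≤ t + ℓ) ∨
      (∃ T', R T' ∧ T ⊆ T' ∧ (∀ x ∈ F, x ∈ T') ∧ T'.card ≤ t) := by
    intro F
    induction F using Finset.induction_on with
    | empty =>
      intro Y T hRT hYT hTt _
      exact Or.inr ⟨T, hRT, Finset.Subset.refl T, by simp, hTt⟩
    | @insert a F ha ih =>
      intro Y T hRT hYT hTt hF
      rcases ih Y T hRT hYT hTt (fun x hx => hF x (Finset.mem_insert_of_mem hx)) with
        hL | ⟨T', hRT', hTT', hFT', hT't⟩
      · exact Or.inl hL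
      by_cases haT' : a ∈ T'
      · refine Or.inr ⟨T', hRT', hTT', fun x hx => ?_, hT't⟩
        rcases Finset.mem_insert.1 hx with rfl | hx
        · exact haT'
        · exact hFT' x hx
      · have haS : a ∈ clStep α ℓ G Y := hF a (Finset.mem_insert_self a F)
        have haY : a ∉ Y := fun h => haT' (hTT' (hYT h))
        have hex : ∃ H : Finset W, Y ⊆ H ∧ 1 ≤ (H \ Y).card ∧ (H \ Y).card ≤ ℓ ∧
            Rigid α G Y H ∧ a ∈ H := by
          rcases Finset.mem_union.1 haS with h | h
          · exact absurd h haY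
          · exact (Finset.mem_filter.1 h).2
        obtain ⟨H, hYH, hc1, hc2, hRig, haH⟩ := hex
        have hYT' : Y ⊆ T' := hYT.trans hTT'
        have hnot : ¬ H ⊆ T' := fun h => haT' (h haH)
        obtain ⟨hb1, hb2, hb3⟩ := step_bound hα hrigid G hYH hYT' hc2 hRig hnot
        obtain ⟨k, hk1, hk2⟩ := hRT'
        have hsub : T' ⊆ T' ∪ H := Finset.subset_union_left
        have hcard : ((T' ∪ H) \ T').card + T'.card = (T' ∪ H).card :=
          Finset.card_sdiff_add_card_eq_card hsub
        have hsplit := myEdges_split G hsub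
        have hR'' : R (T' ∪ H) := by
          refine ⟨k + 1, ?_, ?_⟩
          · have : (T' ∪ H).card ≤ T'.card + ℓ := by omega
            calc (T' ∪ H).card ≤ T'.card + ℓ := this
              _ ≤ ℓ * k + ℓ := by omega
              _ = ℓ * (k + 1) := by ring
          · have hc : ((T' ∪ H).card : ℝ)
                = (T'.card : ℝ) + (((T' ∪ H) \ T').card : ℝ) := by
              exact_mod_cast (by omega : (T' ∪ H).card
                = T'.card + ((T' ∪ H) \ T').card)
            have hm : (myEdges G (T' ∪ H) : ℝ) = (myEdges G T' : ℝ)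
                + ((((T' ∪ H).sym2.filter
                  (fun p => p ∈ G.edgeSet ∧ p ∉ T'.sym2)).card : ℝ)) := by
              exact_mod_cast hsplit
            push_cast
            push_cast at hc hm hk2
            nlinarith [hb3]
        by_cases hle : (T' ∪ H).card ≤ t
        · refine Or.inr ⟨T' ∪ H, hR'', hTT'.trans hsub, fun x hx => ?_, hle⟩
          rcases Finset.mem_insert.1 hx with rfl | hx
          · exact Finset.mem_union_right _ haH
          · exact hsub (hFT' x hx)
        · refine Or.inl ⟨T' ∪ H, hR'', by omega, by omega⟩
  have outer : ∀ j : ℕ,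
      (∃ T', R T' ∧ t < T'.card ∧ T'.card ≤ t + ℓ) ∨
      (∃ T', R T' ∧ (clStep α ℓ G)^[j] ∅ ⊆ T' ∧ T'.card ≤ t) := by
    intro j
    induction j with
    | zero =>
      right
      refine ⟨∅, ⟨0, by simp, ?_⟩, by simp, by simp⟩
      have : myEdges G (∅ : Finset W) = 0 := by
        unfold myEdges
        simp [Finset.sym2_empty]
      rw [this]
      simp
    | succ j ihj =>
      rcases ihj with hL | ⟨T', hRT', hsub, hle⟩
      · exact Or.inl hL
      rcases absorb (clStep α ℓ G ((clStep α ℓ G)^[j] ∅)) ((clStep α ℓ G)^[j] ∅) T'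
          hRT' hsub hle (fun x hx => hx) with hL | ⟨T'', hR'', _, hcov, hle''⟩
      · exact Or.inl hL
      · right
        refine ⟨T'', hR'', ?_, hle''⟩
        rw [Function.iterate_succ_apply']
        exact fun x hx => hcov x hx
  rcases outer (Fintype.card W) with ⟨T, hRT, h1, h2⟩ | ⟨T', _, hsub, hle⟩
  · exact ⟨T, h1, h2, hRT⟩
  · exfalso
    have : (cl α ℓ G ∅).card ≤ T'.card := Finset.card_le_card hsub
    omega

end Det

set_option maxHeartbeats 1600000 in
/-- let `α ∈ (0,1)` be irrational, `ℓ* ∈ ℕ`, and `ζ > 0` be such that every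
rigid pair with `1 ≤ |V1∖V0| ≤ ℓ*` and type `(v,e)` satisfies `v - αe ≤ -ζ`. Fix
`0 < ε < ζ`. Let `P(G) = P_n(G)` where `P₀(G) = ∅` and `P_{j+1}(G)` adds all `H ⊇ P_j(G)`
with `1 ≤ |H∖P_j(G)| ≤ ℓ*` and `(G↾P_j(G), G↾H)` rigid (this is `cl α ℓ* G ∅`). Then
there is `ξ > 0` such that for all large enough `n`,
`Prob(|P(G(n,n^{-α}))| > n^ε) ≤ e^{-n^ξ}`. -/
theorem statement9 (α : ℝ) (hirr : Irrational α) (hα0 : 0 < α) (hα1 : α < 1)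
    (ℓstar : ℕ) (ζ : ℝ) (hζ : 0 < ζ)
    (hrigid : ∀ (V : Type) [Fintype V] [DecidableEq V] (H : SimpleGraph V)
      (V0 V1 : Finset V),
      V0 ⊆ V1 →
      (∀ x y, H.Adj x y → x ∈ V1 ∧ y ∈ V1) →
      1 ≤ (V1 \ V0).card → (V1 \ V0).card ≤ ℓstar →
      Rigid α H V0 V1 →
      ((V1 \ V0).card : ℝ) - α * eType ∅ ⊥ H V0 V1 ≤ -ζ)
    (ε : ℝ) (hε0 : 0 < ε) (hεζ : ε < ζ) :
    ∃ ξ : ℝ, 0 < ξ ∧ ∃ N : ℕ, ∀ n : ℕ, N ≤ n →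
      prob n ((n : ℝ) ^ (-α)) (fun G => (n : ℝ) ^ ε < ((cl α ℓstar G ∅).card : ℝ))
        ≤ Real.exp (-(n : ℝ) ^ ξ) := by
  classical
  rcases Nat.eq_zero_or_pos ℓstar with hℓ0 | hℓpos
  · subst hℓ0
    refine ⟨1, one_pos, 0, fun n _ => ?_⟩
    have hA : ∀ G : SimpleGraph (Fin n), ¬ ((n:ℝ)^ε < ((cl α 0 G ∅).card : ℝ)) := by
      intro G
      have hstep : ∀ Y : Finset (Fin n), clStep α 0 G Y = Y := by
        intro Y
        unfold clStep
        have hempty : (Finset.univ.filter (fun x => ∃ H : Finset (Fin n),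
            Y ⊆ H ∧ 1 ≤ (H \ Y).card ∧ (H \ Y).card ≤ 0 ∧ Rigid α G Y H ∧ x ∈ H)) = ∅ := by
          rw [Finset.filter_eq_empty_iff]
          rintro x - ⟨H, -, h1, h2, -, -⟩
          omega
        rw [hempty, Finset.union_empty]
      have hcl : cl α 0 G ∅ = ∅ := by
        unfold cl
        rw [Function.iterate_fixed (hstep ∅)]
      rw [hcl]
      simp only [Finset.card_empty, Nat.cast_zero, not_lt]
      positivity
    have hz : prob n ((n:ℝ)^(-α)) (fun G => (n : ℝ) ^ ε < ((cl α 0 G ∅).card : ℝ)) = 0 := by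
      unfold prob
      exact Finset.sum_eq_zero (fun E _ => if_neg (hA _))
    rw [hz]
    positivity
  -- main case : ℓstar ≥ 1
  have hℓR : (0:ℝ) < (ℓstar:ℝ) := by exact_mod_cast hℓpos
  set r : ℝ := ζ / ℓstar with hr
  have hrpos : 0 < r := by positivity
  set c : ℝ := r / 2 with hc
  have hcpos : 0 < c := by positivity
  set δ : ℝ := min ε (r * α / (8 * (1 + r))) with hδdef
  have hδpos : 0 < δ := lt_min hε0 (by positivity)
  have hδε : δ ≤ ε := min_le_left _ _
  have hδle : δ ≤ r * α / (8 * (1 + r)) := min_le_right _ _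
  have hδ1 : δ ≤ 1 := by
    refine le_trans hδle ?_
    rw [div_le_one (by positivity)]
    nlinarith [hrpos, hα1, hα0]
  have hδkey : 4 * δ * (1 + r) ≤ c * α := by
    have h1 : 4 * δ * (1 + r) ≤ 4 * (r * α / (8 * (1 + r))) * (1 + r) := by
      have := mul_le_mul_of_nonneg_right
        (mul_le_mul_of_nonneg_left hδle (by norm_num : (0:ℝ) ≤ 4))
        (by positivity : (0:ℝ) ≤ 1 + r)
      linarith
    have h2 : 4 * (r * α / (8 * (1 + r))) * (1 + r) = c * α := by
      rw [hc]
      field_simp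
      ring
    linarith
  set K : ℝ := 1 + ℓstar + 4 * δ + c with hK
  refine ⟨δ / 2, by positivity, ?_⟩
  have htend : Filter.Tendsto (fun n : ℕ => (n:ℝ) ^ δ) Filter.atTop Filter.atTop :=
    (tendsto_rpow_atTop hδpos).comp tendsto_natCast_atTop_atTop
  have htend2 : Filter.Tendsto (fun n : ℕ => (n:ℝ) ^ (δ/2)) Filter.atTop Filter.atTop :=
    (tendsto_rpow_atTop (by positivity)).comp tendsto_natCast_atTop_atTop
  have hev := (Filter.eventually_ge_atTop 2).and
    ((htend.eventually_ge_atTop ((ℓstar:ℝ)+2)).and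
      ((htend.eventually_ge_atTop (2*K/c)).and
        (htend2.eventually_ge_atTop (2/(c*Real.log 2)))))
  obtain ⟨N, hN⟩ := Filter.eventually_atTop.1 hev
  refine ⟨N, fun n hn => ?_⟩
  obtain ⟨hn2, hC2, hC3, hC4⟩ := hN n hn

  have hx2 : (2:ℝ) ≤ (n:ℝ) := by exact_mod_cast hn2
  have hx1 : (1:ℝ) ≤ (n:ℝ) := by linarith
  have hxpos : (0:ℝ) < (n:ℝ) := by linarith
  set t : ℕ := ⌊(n:ℝ)^δ⌋₊ with ht
  set e₀ : ℕ := ⌈(t:ℝ)*(1+r)/α⌉₊ with he₀def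
  have htle : (t:ℝ) ≤ (n:ℝ)^δ := Nat.floor_le (by positivity)
  have htgt : (n:ℝ)^δ - 1 < (t:ℝ) := Nat.sub_one_lt_floor _
  have hp0 : (0:ℝ) ≤ (n:ℝ)^(-α) := Real.rpow_nonneg (by positivity) _
  have hp1 : (n:ℝ)^(-α) ≤ 1 :=
    Real.rpow_le_one_of_one_le_of_nonpos hx1 (by linarith)
  -- the index family for the union bound
  set 𝒯 : Finset (Finset (Fin n)) :=
    Finset.univ.filter (fun T => t < T.card ∧ T.card ≤ t + ℓstar) with h𝒯
  set I : Finset (Finset (Fin n) × Finset (Sym2 (Fin n))) :=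
    𝒯.biUnion (fun T =>
      ((T.sym2.filter (fun e => ¬ e.IsDiag)).powersetCard e₀).image (fun F => (T, F))) with hI
  have hcov : ∀ G : SimpleGraph (Fin n), ((n:ℝ)^ε < ((cl α ℓstar G ∅).card : ℝ)) →
      ∃ i ∈ I, (∀ e ∈ i.2, e ∈ G.edgeSet) := by
    intro G hG
    have htlt : t < (cl α ℓstar G ∅).card := by
      have h1 : (t:ℝ) < ((cl α ℓstar G ∅).card : ℝ) := by
        have h2 : (n:ℝ)^δ ≤ (n:ℝ)^ε := Real.rpow_le_rpow_of_exponent_le hx1 hδε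
        linarith
      exact_mod_cast h1
    obtain ⟨T, hT1, hT2, k, hk1, hk2⟩ := det_lemma (le_of_lt hα0) hrigid G t htlt
    have hTedge : e₀ ≤ myEdges G T := by
      rw [he₀def, Nat.ceil_le, div_le_iff₀ hα0]
      have h1 : (t:ℝ) + 1 ≤ (T.card:ℝ) := by exact_mod_cast hT1
      have h2 : (T.card:ℝ) ≤ (ℓstar:ℝ) * (k:ℝ) := by exact_mod_cast hk1
      have h3 : r * (T.card:ℝ) ≤ ζ * (k:ℝ) := by
        rw [hr, div_mul_eq_mul_div, div_le_iff₀ hℓR]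
        nlinarith [hζ.le, h2]
      have h4 : (T.card:ℝ) * (1 + r) ≤ α * (myEdges G T : ℝ) := by linarith [hk2, h3]
      nlinarith [hrpos, h1, h4]
    unfold myEdges at hTedge
    obtain ⟨F, hFsub, hFcard⟩ := Finset.exists_subset_card_eq hTedge
    refine ⟨(T, F), ?_, ?_⟩
    · rw [hI]
      apply Finset.mem_biUnion.2
      refine ⟨T, Finset.mem_filter.2 ⟨Finset.mem_univ _, hT1, hT2⟩,
        Finset.mem_image.2 ⟨F, ?_, rfl⟩⟩
      rw [Finset.mem_powersetCard]
      refine ⟨fun p hp => ?_, hFcard⟩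
      have hmem := hFsub hp
      rw [Finset.mem_filter] at hmem ⊢
      exact ⟨hmem.1, SimpleGraph.not_isDiag_of_mem_edgeSet G hmem.2⟩
    · intro e he
      exact (Finset.mem_filter.1 (hFsub he)).2
  have hub := prob_union_bound hp0 hp1 I
    (fun G => (n : ℝ) ^ ε < ((cl α ℓstar G ∅).card : ℝ))
    (fun i G => ∀ e ∈ i.2, e ∈ G.edgeSet) hcov
  have hIprop : ∀ i ∈ I, i.2 ⊆ allEdges n ∧ i.2.card = e₀ := by
    intro i hi
    rw [hI] at hi
    obtain ⟨T, hT, hmem⟩ := Finset.mem_biUnion.1 hi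
    obtain ⟨F, hF, rfl⟩ := Finset.mem_image.1 hmem
    rw [Finset.mem_powersetCard] at hF
    refine ⟨fun p hp => ?_, hF.2⟩
    have := hF.1 hp
    rw [Finset.mem_filter] at this
    unfold allEdges
    rw [Finset.mem_filter]
    exact ⟨Finset.mem_univ _, this.2⟩
  have hsum : ∑ i ∈ I, prob n ((n:ℝ)^(-α)) (fun G => ∀ e ∈ i.2, e ∈ G.edgeSet)
      = (I.card : ℝ) * ((n:ℝ)^(-α))^e₀ := by
    rw [Finset.sum_congr rfl (fun i hi => ?_), Finset.sum_const, nsmul_eq_mul]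
    rw [prob_edges_eq _ _ (hIprop i hi).1, (hIprop i hi).2]
  -- counting
  have hTcount : 𝒯.card ≤ ℓstar * n ^ (t + ℓstar) := by
    have hsub : 𝒯 ⊆ (Finset.Icc (t+1) (t+ℓstar)).biUnion
        (fun m => Finset.univ.powersetCard m) := by
      intro T hT
      rw [h𝒯, Finset.mem_filter] at hT
      apply Finset.mem_biUnion.2
      exact ⟨T.card, Finset.mem_Icc.2 ⟨hT.2.1, hT.2.2⟩, Finset.mem_powersetCard_univ.2 rfl⟩
    calc 𝒯.card ≤ _ := Finset.card_le_card hsub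
      _ ≤ ∑ m ∈ Finset.Icc (t+1) (t+ℓstar), (Finset.univ.powersetCard m).card :=
        Finset.card_biUnion_le
      _ ≤ ∑ _m ∈ Finset.Icc (t+1) (t+ℓstar), n ^ (t + ℓstar) := by
        refine Finset.sum_le_sum (fun m hm => ?_)
        rw [Finset.card_powersetCard, Finset.card_univ, Fintype.card_fin]
        refine le_trans (Nat.choose_le_pow n m) ?_
        exact Nat.pow_le_pow_right (by omega) (Finset.mem_Icc.1 hm).2
      _ = (Finset.Icc (t+1) (t+ℓstar)).card * n ^ (t + ℓstar) := by
        rw [Finset.sum_const, smul_eq_mul]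
      _ ≤ ℓstar * n ^ (t + ℓstar) := by
        rw [Nat.card_Icc]
        apply Nat.mul_le_mul_right
        omega
  have hIcount : I.card ≤ ℓstar * n ^ (t + ℓstar) * ((t + ℓstar + 1)^2) ^ e₀ := by
    calc I.card ≤ ∑ T ∈ 𝒯,
        (((T.sym2.filter (fun e => ¬ e.IsDiag)).powersetCard e₀).image
          (fun F => (T, F))).card := Finset.card_biUnion_le
      _ ≤ ∑ _T ∈ 𝒯, ((t + ℓstar + 1)^2) ^ e₀ := by
        refine Finset.sum_le_sum (fun T hT => ?_)
        refine le_trans Finset.card_image_le ?_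
        rw [Finset.card_powersetCard]
        have hc1 : (T.sym2.filter (fun e => ¬ e.IsDiag)).card ≤ (t + ℓstar + 1)^2 := by
          have h1 : (T.sym2.filter (fun e => ¬ e.IsDiag)).card ≤ T.sym2.card :=
            Finset.card_le_card (Finset.filter_subset _ _)
          have h2 : T.sym2.card = (T.card + 1).choose 2 := Finset.card_sym2 T
          have h3 : (T.card + 1).choose 2 ≤ (T.card + 1)^2 := Nat.choose_le_pow (T.card+1) 2
          have h4 : T.card ≤ t + ℓstar := by
            rw [h𝒯, Finset.mem_filter] at hT
            exact hT.2.2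
          have h5 : (T.card + 1)^2 ≤ (t + ℓstar + 1)^2 := Nat.pow_le_pow_left (by omega) 2
          omega
        exact le_trans (Nat.choose_le_choose e₀ hc1) (Nat.choose_le_pow _ e₀)
      _ = 𝒯.card * ((t + ℓstar + 1)^2) ^ e₀ := by rw [Finset.sum_const, smul_eq_mul]
      _ ≤ ℓstar * n ^ (t + ℓstar) * ((t + ℓstar + 1)^2) ^ e₀ :=
        Nat.mul_le_mul_right _ hTcount
  have hchain : prob n ((n:ℝ)^(-α))
      (fun G => (n : ℝ) ^ ε < ((cl α ℓstar G ∅).card : ℝ))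
      ≤ ((ℓstar : ℝ) * (n:ℝ) ^ (t + ℓstar) * (((t:ℝ) + ℓstar + 1)^2) ^ e₀)
        * ((n:ℝ)^(-α))^e₀ := by
    refine le_trans hub ?_
    rw [hsum]
    have h1 : (I.card : ℝ) ≤ ((ℓstar * n ^ (t + ℓstar) * ((t + ℓstar + 1)^2) ^ e₀ : ℕ) : ℝ) :=
      by exact_mod_cast hIcount
    have h2 : ((ℓstar * n ^ (t + ℓstar) * ((t + ℓstar + 1)^2) ^ e₀ : ℕ) : ℝ)
        = (ℓstar : ℝ) * (n:ℝ) ^ (t + ℓstar) * (((t:ℝ) + ℓstar + 1)^2) ^ e₀ := by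
      push_cast
      ring
    rw [← h2]
    exact mul_le_mul_of_nonneg_right h1 (pow_nonneg hp0 _)
  refine le_trans hchain ?_
  clear hcov hub hsum hIprop hTcount hIcount hchain hI h𝒯
  clear_value 𝒯 I
  clear 𝒯 I
  -- final numeric estimate
  have he₀low : (t:ℝ)*(1+r) ≤ α * (e₀:ℝ) := by
    have := Nat.le_ceil ((t:ℝ)*(1+r)/α)
    rw [← he₀def] at this
    rw [div_le_iff₀ hα0] at this
    linarith
  have he₀up : α * (e₀:ℝ) ≤ (t:ℝ)*(1+r) + α := by
    have h1 : (e₀:ℝ) < (t:ℝ)*(1+r)/α + 1 := Nat.ceil_lt_add_one (by positivity)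
    have h2 : (e₀:ℝ) * α < ((t:ℝ)*(1+r)/α + 1) * α :=
      mul_lt_mul_of_pos_right h1 hα0
    rw [add_mul, div_mul_cancel₀ _ (ne_of_gt hα0)] at h2
    linarith
  clear_value t e₀
  set Lg : ℝ := Real.log (n:ℝ) with hLg
  have hLgpos : 0 < Lg := Real.log_pos (by linarith)
  have hlog2pos : (0:ℝ) < Real.log 2 := Real.log_pos one_lt_two
  have hLg2 : Real.log 2 ≤ Lg := Real.log_le_log (by norm_num) hx2
  have hxδ1 : (1:ℝ) ≤ (n:ℝ)^δ := by
    have : (ℓstar:ℝ) + 2 ≤ (n:ℝ)^δ := hC2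
    linarith
  have hℓx : (ℓstar:ℝ) ≤ (n:ℝ) := by
    have h1 : (n:ℝ)^δ ≤ (n:ℝ)^(1:ℝ) := Real.rpow_le_rpow_of_exponent_le hx1 hδ1
    rw [Real.rpow_one] at h1
    linarith
  have hb2δ : (t:ℝ) + ℓstar + 1 ≤ (n:ℝ)^(2*δ) := by
    have hsplit : (n:ℝ)^(2*δ) = (n:ℝ)^δ * (n:ℝ)^δ := by
      rw [two_mul, Real.rpow_add hxpos]
    nlinarith [hC2, htle, hxδ1, hℓR]
  have hlog3 : Real.log ((t:ℝ) + ℓstar + 1) ≤ 2*δ*Lg := by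
    have h1 : Real.log ((t:ℝ) + ℓstar + 1) ≤ Real.log ((n:ℝ)^(2*δ)) :=
      Real.log_le_log (by positivity) hb2δ
    rwa [Real.log_rpow hxpos] at h1
  -- positivity of the four factors
  have hX1pos : (0:ℝ) < (ℓstar:ℝ) := hℓR
  have hX2pos : (0:ℝ) < (n:ℝ) ^ (t + ℓstar) := pow_pos hxpos _
  have hX3pos : (0:ℝ) < (((t:ℝ) + ℓstar + 1)^2) ^ e₀ := by positivity
  have hX4pos : (0:ℝ) < ((n:ℝ)^(-α))^e₀ := pow_pos (Real.rpow_pos_of_pos hxpos _) _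
  rw [← Real.log_le_iff_le_exp (by positivity)]
  rw [Real.log_mul (by positivity) (ne_of_gt hX4pos),
      Real.log_mul (by positivity) (ne_of_gt hX3pos),
      Real.log_mul (ne_of_gt hX1pos) (ne_of_gt hX2pos)]
  rw [Real.log_pow, Real.log_pow, Real.log_pow, Real.log_pow, Real.log_rpow hxpos, ← hLg]
  have hlogX1 : Real.log (ℓstar:ℝ) ≤ Lg := Real.log_le_log hℓR hℓx
  -- assemble
  have hb3 : (e₀:ℝ) * (2 * Real.log ((t:ℝ) + ℓstar + 1)) ≤ (e₀:ℝ) * (2 * (2*δ*Lg)) := by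
    apply mul_le_mul_of_nonneg_left _ (by positivity)
    linarith
  have h4δ : 4*δ*(e₀:ℝ) ≤ c*(t:ℝ) + 4*δ := by
    have htnn : (0:ℝ) ≤ (t:ℝ) := Nat.cast_nonneg t
    have u1 : 4*δ*(α*(e₀:ℝ)) ≤ 4*δ*((t:ℝ)*(1+r) + α) :=
      mul_le_mul_of_nonneg_left he₀up (by positivity)
    have u2 : (t:ℝ)*(4*δ*(1+r)) ≤ (t:ℝ)*(c*α) := mul_le_mul_of_nonneg_left hδkey htnn
    have u3 : (4*δ*(e₀:ℝ))*α ≤ (c*(t:ℝ) + 4*δ)*α := by nlinarith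
    exact le_of_mul_le_mul_right (by linarith) hα0
  have hbracket : 1 + ((t:ℝ) + ℓstar) + 4*δ*(e₀:ℝ) - α*(e₀:ℝ) ≤ K - c*((n:ℝ)^δ) := by
    have hr2c : (1+r) = 1 + 2*c := by rw [hc]; ring
    have hlow : (t:ℝ) + 2*(c*(t:ℝ)) ≤ α*(e₀:ℝ) := by
      have : (t:ℝ)*(1+r) = (t:ℝ) + 2*(c*(t:ℝ)) := by rw [hr2c]; ring
      linarith [he₀low]
    have hct : c*((n:ℝ)^δ) - c < c*(t:ℝ) := by
      have := mul_lt_mul_of_pos_left htgt hcpos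
      linarith [this]
    rw [hK]
    linarith
  have hsumlog : Real.log (ℓstar:ℝ) + ((t:ℝ) + ℓstar) * Lg
      + (e₀:ℝ) * (2 * Real.log ((t:ℝ) + ℓstar + 1)) + (e₀:ℝ) * (-α * Lg)
      ≤ Lg * (K - c*((n:ℝ)^δ)) := by
    have step : Real.log (ℓstar:ℝ) + ((t:ℝ) + ℓstar) * Lg
        + (e₀:ℝ) * (2 * Real.log ((t:ℝ) + ℓstar + 1)) + (e₀:ℝ) * (-α * Lg)
        ≤ Lg * (1 + ((t:ℝ) + ℓstar) + 4*δ*(e₀:ℝ) - α*(e₀:ℝ)) := by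
      nlinarith [hb3, hlogX1, hLgpos]
    refine le_trans step ?_
    exact mul_le_mul_of_nonneg_left hbracket (le_of_lt hLgpos)
  -- Lg * (K - c n^δ) ≤ - n^(δ/2)
  have hKbound : K ≤ (c/2)*((n:ℝ)^δ) := by
    have h1 : (c/2)*(2*K/c) ≤ (c/2)*((n:ℝ)^δ) :=
      mul_le_mul_of_nonneg_left hC3 (by positivity)
    have h2 : (c/2)*(2*K/c) = K := by field_simp
    linarith
  have hfin : (n:ℝ)^(δ/2) ≤ (c/2)*(Lg*((n:ℝ)^δ)) := by
    have hxsplit : (n:ℝ)^δ = (n:ℝ)^(δ/2) * (n:ℝ)^(δ/2) := by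
      rw [← Real.rpow_add hxpos]
      norm_num
    have hhalfpos : (0:ℝ) ≤ (n:ℝ)^(δ/2) := Real.rpow_nonneg (by positivity) _
    have h1le : 1 ≤ (c/2)*Lg*((n:ℝ)^(δ/2)) := by
      have s1 : (c/2)*Real.log 2*(2/(c*Real.log 2)) = 1 := by
        field_simp
      have s2 : (c/2)*Real.log 2*(2/(c*Real.log 2)) ≤ (c/2)*Real.log 2*((n:ℝ)^(δ/2)) :=
        mul_le_mul_of_nonneg_left hC4 (by positivity)
      have s3 : (c/2)*Real.log 2*((n:ℝ)^(δ/2)) ≤ (c/2)*Lg*((n:ℝ)^(δ/2)) := by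
        apply mul_le_mul_of_nonneg_right _ hhalfpos
        apply mul_le_mul_of_nonneg_left hLg2 (by positivity)
      linarith
    have h2 : 1*((n:ℝ)^(δ/2)) ≤ ((c/2)*Lg*((n:ℝ)^(δ/2)))*((n:ℝ)^(δ/2)) :=
      mul_le_mul_of_nonneg_right h1le hhalfpos
    rw [hxsplit]
    linarith only [h2]
  have hKL : Lg*K ≤ Lg*((c/2)*((n:ℝ)^δ)) :=
    mul_le_mul_of_nonneg_left hKbound (le_of_lt hLgpos)
  clear_value Lg
  clear htend htend2 hev hN
  clear_value r c δ K
  have hfinal : Real.log (ℓstar:ℝ) + ((t:ℝ) + ℓstar) * Lg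
      + (e₀:ℝ) * (2 * Real.log ((t:ℝ) + ℓstar + 1)) + (e₀:ℝ) * (-α * Lg)
      ≤ -((n:ℝ) ^ (δ/2)) := by linarith only [hsumlog, hfin, hKL]
  push_cast
  linarith [hfinal]

end RandomGraphPaper
end

section
/- Let α ∈ (0,1) be irrational, ℓ* ∈ ℕ, and let ζ > 0 be such that every rigid pair (H₀,H₁) with 1 ≤ |V(H₁)∖V(H₀)| ≤ ℓ* and type (v,e) satisfies v − αe ≤ −ζ. Let H be a finite graph with v vertices and e edges admitting a chain ∅ = A₀ ⊊ A₁ ⊊ ⋯ ⊊ A_M = V(H) such that for each i < M, |A_{i+1}∖A_i| ≤ ℓ* and the pair (H↾A_i, H↾A_{i+1}) is rigid. Then v − αe ≤ −ζ·M, and consequently the probability that G(n,n^{−α}) contains a subgraph isomorphic to H is at most n^{−ζM}. -/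
open FirstOrder Filter Finset Asymptotics
open scoped Classical

namespace RandomGraphPaper

variable {V : Type*} [Fintype V] [DecidableEq V]

/-! ### Auxiliary lemmas for Statement 10 -/

lemma sum_pow_card10 {γ : Type*} [DecidableEq γ] (S : Finset γ) (p q : ℝ) :
    ∑ E ∈ S.powerset, p ^ E.card * q ^ (S.card - E.card) = (p + q) ^ S.card := by
  induction S using Finset.induction_on with
  | empty => simp
  | @insert a S ha IH =>
    rw [Finset.powerset_insert, Finset.sum_union]
    · have h1 : ∑ E ∈ S.powerset, p ^ E.card * q ^ ((insert a S).card - E.card)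
          = q * ∑ E ∈ S.powerset, p ^ E.card * q ^ (S.card - E.card) := by
        rw [Finset.mul_sum]
        refine Finset.sum_congr rfl fun E hE => ?_
        have hc : E.card ≤ S.card := Finset.card_le_card (Finset.mem_powerset.1 hE)
        rw [Finset.card_insert_of_notMem ha]
        have : S.card + 1 - E.card = (S.card - E.card) + 1 := by omega
        rw [this, pow_succ]
        ring
      have h2 : ∑ E ∈ S.powerset.image (insert a), p ^ E.card * q ^ ((insert a S).card - E.card)
          = p * ∑ E ∈ S.powerset, p ^ E.card * q ^ (S.card - E.card) := by
        rw [Finset.sum_image, Finset.mul_sum]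
        · refine Finset.sum_congr rfl fun E hE => ?_
          have haE : a ∉ E := fun h => ha (Finset.mem_powerset.1 hE h)
          rw [Finset.card_insert_of_notMem haE, Finset.card_insert_of_notMem ha]
          have : S.card + 1 - (E.card + 1) = S.card - E.card := by omega
          rw [this, pow_succ]
          ring
        · intro E hE F hF hEF
          have haE : a ∉ E := fun h => ha (Finset.mem_powerset.1 hE h)
          have haF : a ∉ F := fun h => ha (Finset.mem_powerset.1 hF h)
          rw [← Finset.erase_insert haE, ← Finset.erase_insert haF, hEF]
      rw [h1, h2, IH, Finset.card_insert_of_notMem ha, pow_succ]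
      ring
    · rw [Finset.disjoint_right]
      rintro E hE hE'
      obtain ⟨F, hF, rfl⟩ := Finset.mem_image.1 hE
      exact ha (Finset.mem_powerset.1 hE' (Finset.mem_insert_self a F))

lemma sum_subset_indicator10 {γ : Type*} [DecidableEq γ] (S F : Finset γ) (hF : F ⊆ S) (p : ℝ) :
    ∑ E ∈ S.powerset, (if F ⊆ E then p ^ E.card * (1 - p) ^ (S.card - E.card) else 0)
      = p ^ F.card := by
  rw [← Finset.sum_filter]
  have key : ∑ E ∈ S.powerset.filter (fun E => F ⊆ E), p ^ E.card * (1 - p) ^ (S.card - E.card)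
      = ∑ E' ∈ (S \ F).powerset,
          p ^ F.card * (p ^ E'.card * (1 - p) ^ ((S \ F).card - E'.card)) := by
    refine Finset.sum_bij' (fun E _ => E \ F) (fun E' _ => E' ∪ F) ?_ ?_ ?_ ?_ ?_
    · intro E hE
      rw [Finset.mem_filter, Finset.mem_powerset] at hE
      exact Finset.mem_powerset.2 (Finset.sdiff_subset_sdiff hE.1 (le_refl F))
    · intro E' hE'
      rw [Finset.mem_powerset] at hE'
      rw [Finset.mem_filter, Finset.mem_powerset]
      exact ⟨Finset.union_subset (hE'.trans Finset.sdiff_subset) hF, Finset.subset_union_right⟩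
    · intro E hE
      rw [Finset.mem_filter] at hE
      exact Finset.sdiff_union_of_subset hE.2
    · intro E' hE'
      rw [Finset.mem_powerset] at hE'
      have hd : Disjoint E' F := Finset.disjoint_of_subset_left hE' (Finset.sdiff_disjoint)
      show (E' ∪ F) \ F = E'
      rw [Finset.union_sdiff_cancel_right hd]
    · intro E hE
      rw [Finset.mem_filter, Finset.mem_powerset] at hE
      have h1 : (E \ F).card + F.card = E.card := Finset.card_sdiff_add_card_eq_card hE.2
      have h2 : F.card ≤ E.card := Finset.card_le_card hE.2
      have h3 : E.card ≤ S.card := Finset.card_le_card hE.1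
      have h4 : (S \ F).card + F.card = S.card := Finset.card_sdiff_add_card_eq_card hF
      have hc1 : E.card = (E \ F).card + F.card := h1.symm
      have hc2 : S.card - E.card = (S \ F).card - (E \ F).card := by omega
      show p ^ E.card * (1 - p) ^ (S.card - E.card)
          = p ^ F.card * (p ^ (E \ F).card * (1 - p) ^ ((S \ F).card - (E \ F).card))
      rw [hc2, hc1, pow_add]
      ring
  rw [key, ← Finset.mul_sum, sum_pow_card10]
  norm_num

lemma prob_le_one10 (n : ℕ) (p : ℝ) (hp0 : 0 ≤ p) (hp1 : p ≤ 1)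
    (A : SimpleGraph (Fin n) → Prop) : prob n p A ≤ 1 := by
  unfold prob
  calc _ ≤ ∑ E ∈ (allEdges n).powerset, p ^ E.card * (1 - p) ^ ((allEdges n).card - E.card) := by
        refine Finset.sum_le_sum fun E _ => ?_
        split
        · exact le_refl _
        · have : (0:ℝ) ≤ 1 - p := by linarith
          positivity
    _ = (p + (1 - p)) ^ (allEdges n).card := sum_pow_card10 _ p (1 - p)
    _ = 1 := by norm_num

lemma telescope10 (M : ℕ) (f : Fin (M + 1) → ℕ) (d : Fin M → ℕ)
    (h : ∀ i : Fin M, f i.castSucc + d i = f i.succ) :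
    f 0 + ∑ i : Fin M, d i = f (Fin.last M) := by
  induction M with
  | zero => simp
  | succ M IH =>
    have step := IH (f ∘ Fin.castSucc) (d ∘ Fin.castSucc) (fun i => by
      simpa only [Function.comp_apply, Fin.succ_castSucc] using h i.castSucc)
    rw [Fin.sum_univ_castSucc, ← add_assoc]
    simp only [Function.comp] at step
    rw [Fin.castSucc_zero] at step
    rw [step]
    simpa using h (Fin.last M)

/-- restriction of a graph to a finset (with ambient vertex type kept) -/
def restr10 {W : Type*} (H : SimpleGraph W) (U : Finset W) : SimpleGraph W where
  Adj x y := H.Adj x y ∧ x ∈ U ∧ y ∈ U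
  symm := ⟨fun _ _ ⟨h, hx, hy⟩ => ⟨h.symm, hy, hx⟩⟩
  loopless := ⟨fun _ ⟨h, _⟩ => H.irrefl h⟩

lemma mem_edgeSet_restr10 {W : Type*} (H : SimpleGraph W) (U T : Finset W) (hTU : T ⊆ U)
    (p : Sym2 W) (hp : p ∈ T.sym2) : (p ∈ (restr10 H U).edgeSet ↔ p ∈ H.edgeSet) := by
  induction p with
  | _ x y =>
    rw [Finset.mk_mem_sym2_iff] at hp
    simp only [SimpleGraph.mem_edgeSet, restr10]
    exact ⟨fun h => h.1, fun h => ⟨h, hTU hp.1, hTU hp.2⟩⟩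

lemma eType_restr10 (H : SimpleGraph V) (U V0 V1 : Finset V) (hT : V1 ⊆ U) :
    eType ∅ ⊥ (restr10 H U) V0 V1 = eType ∅ ⊥ H V0 V1 := by
  unfold eType
  congr 1
  ext p
  simp only [Finset.mem_filter, Finset.union_empty, SimpleGraph.edgeSet_bot,
    Set.mem_empty_iff_false, or_false]
  constructor
  · rintro ⟨hp, he, hn⟩
    exact ⟨hp, (mem_edgeSet_restr10 H U V1 hT p hp).1 he, hn⟩
  · rintro ⟨hp, he, hn⟩
    exact ⟨hp, (mem_edgeSet_restr10 H U V1 hT p hp).2 he, hn⟩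

lemma eType_card10 (H : SimpleGraph V) [DecidableRel H.Adj] (V0 V1 : Finset V) (h : V0 ⊆ V1) :
    (V0.sym2.filter (fun p => p ∈ H.edgeSet)).card + eType ∅ ⊥ H V0 V1
      = (V1.sym2.filter (fun p => p ∈ H.edgeSet)).card := by
  classical
  set s : Finset (Sym2 V) := V1.sym2.filter (fun p => p ∈ H.edgeSet) with hs
  have main : (s.filter (fun p => p ∈ V0.sym2)).card + (s.filter (fun p => ¬ p ∈ V0.sym2)).card
      = s.card := Finset.card_filter_add_card_filter_not (fun p => p ∈ V0.sym2)
  have e1 : s.filter (fun p => p ∈ V0.sym2) = V0.sym2.filter (fun p => p ∈ H.edgeSet) := by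
    ext p
    simp only [hs, Finset.mem_filter]
    constructor
    · rintro ⟨⟨_, he⟩, hp⟩; exact ⟨hp, he⟩
    · rintro ⟨hp, he⟩; exact ⟨⟨Finset.sym2_mono h hp, he⟩, hp⟩
  have e2 : eType ∅ ⊥ H V0 V1 = (s.filter (fun p => ¬ p ∈ V0.sym2)).card := by
    unfold eType
    congr 1
    ext p
    simp only [hs, Finset.mem_filter, Finset.union_empty, SimpleGraph.edgeSet_bot,
      Set.mem_empty_iff_false, or_false]
    tauto
  rw [e2, ← e1]
  exact main

set_option maxHeartbeats 1600000

/-- let `α ∈ (0,1)` be irrational, `ℓ* ∈ ℕ`, and `ζ > 0` be such that every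
rigid pair with `1 ≤ |V1∖V0| ≤ ℓ*` and type `(v,e)` satisfies `v - αe ≤ -ζ`. Let `H` be a
finite graph with `v` vertices and `e` edges admitting a chain
`∅ = A₀ ⊊ A₁ ⊊ ⋯ ⊊ A_M = V(H)` with `|A_{i+1}∖A_i| ≤ ℓ*` and `(H↾A_i, H↾A_{i+1})` rigid
for each `i < M`. Then `v - αe ≤ -ζM`, and consequently the probability that
`G(n,n^{-α})` contains a subgraph isomorphic to `H` is at most `n^{-ζM}`. -/
theorem statement10 (α : ℝ) (hirr : Irrational α) (hα0 : 0 < α) (hα1 : α < 1)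
    (ℓstar : ℕ) (ζ : ℝ) (hζ : 0 < ζ)
    (hrigid : ∀ (V : Type) [Fintype V] [DecidableEq V] (H : SimpleGraph V)
      (V0 V1 : Finset V),
      V0 ⊆ V1 →
      (∀ x y, H.Adj x y → x ∈ V1 ∧ y ∈ V1) →
      1 ≤ (V1 \ V0).card → (V1 \ V0).card ≤ ℓstar →
      Rigid α H V0 V1 →
      ((V1 \ V0).card : ℝ) - α * eType ∅ ⊥ H V0 V1 ≤ -ζ)
    (W : Type) [Fintype W] [DecidableEq W] (H : SimpleGraph W) [DecidableRel H.Adj]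
    (M : ℕ) (A : Fin (M + 1) → Finset W)
    (hA0 : A 0 = ∅) (hAM : A (Fin.last M) = Finset.univ)
    (hchain : ∀ i : Fin M, A i.castSucc ⊂ A i.succ)
    (hcard : ∀ i : Fin M, (A i.succ \ A i.castSucc).card ≤ ℓstar)
    (hrig : ∀ i : Fin M, Rigid α H (A i.castSucc) (A i.succ)) :
    ((Fintype.card W : ℝ) - α * H.edgeFinset.card ≤ -(ζ * M)) ∧
    ∀ n : ℕ,
      prob n ((n : ℝ) ^ (-α)) (fun G => ∃ f : W → Fin n, Function.Injective f ∧
          ∀ x y, H.Adj x y → G.Adj (f x) (f y))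
        ≤ (n : ℝ) ^ (-(ζ * M)) := by
  classical
  -- Part 1: v - αe ≤ -ζM
  have part1 : ((Fintype.card W : ℝ)) - α * H.edgeFinset.card ≤ -(ζ * M) := by
    have step : ∀ i : Fin M, ((A i.succ \ A i.castSucc).card : ℝ)
        - α * eType ∅ ⊥ H (A i.castSucc) (A i.succ) ≤ -ζ := by
      intro i
      have hsub : A i.castSucc ⊆ A i.succ := (hchain i).1
      set Hi := restr10 H (A i.succ) with hHi
      have hedge : ∀ x y, Hi.Adj x y → x ∈ A i.succ ∧ y ∈ A i.succ :=
        fun x y h => ⟨(show H.Adj x y ∧ x ∈ A i.succ ∧ y ∈ A i.succ from h).2.1,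
          (show H.Adj x y ∧ x ∈ A i.succ ∧ y ∈ A i.succ from h).2.2⟩
      have h1 : 1 ≤ (A i.succ \ A i.castSucc).card := by
        rw [Nat.one_le_iff_ne_zero, ← Nat.pos_iff_ne_zero, Finset.card_pos,
          Finset.sdiff_nonempty]
        exact (hchain i).2
      have hrig' : Rigid α Hi (A i.castSucc) (A i.succ) := by
        intro S hS1 hS2 hS3
        have hd := hrig i S hS1 hS2 hS3
        unfold DenseQ at hd ⊢
        rwa [eType_restr10 H (A i.succ) S (A i.succ) (le_refl _)]
      have := hrigid W Hi (A i.castSucc) (A i.succ) hsub hedge h1 (hcard i) hrig'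
      rwa [eType_restr10 H (A i.succ) (A i.castSucc) (A i.succ) (le_refl _)] at this
    have hv : (A 0).card + ∑ i : Fin M, (A i.succ \ A i.castSucc).card
        = (A (Fin.last M)).card :=
      telescope10 M (fun i => (A i).card) _ (fun i => by
        rw [add_comm]; exact Finset.card_sdiff_add_card_eq_card (hchain i).1)
    have he : ((A 0).sym2.filter (fun p => p ∈ H.edgeSet)).card
        + ∑ i : Fin M, eType ∅ ⊥ H (A i.castSucc) (A i.succ)
        = ((A (Fin.last M)).sym2.filter (fun p => p ∈ H.edgeSet)).card :=
      telescope10 M (fun i => ((A i).sym2.filter (fun p => p ∈ H.edgeSet)).card) _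
        (fun i => by simpa using eType_card10 H _ _ (hchain i).1)
    rw [hA0] at hv he
    rw [hAM] at hv he
    simp only [Finset.card_empty, Finset.sym2_empty, Finset.filter_empty, zero_add] at hv he
    have hv' : ∑ i : Fin M, (A i.succ \ A i.castSucc).card = Fintype.card W := by
      rw [hv, Finset.card_univ]
    have he' : ∑ i : Fin M, eType ∅ ⊥ H (A i.castSucc) (A i.succ) = H.edgeFinset.card := by
      rw [he]
      congr 1
      ext p
      simp [SimpleGraph.mem_edgeFinset]
    have main : ((Fintype.card W : ℝ)) - α * H.edgeFinset.card
        = ∑ i : Fin M, (((A i.succ \ A i.castSucc).card : ℝ)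
            - α * eType ∅ ⊥ H (A i.castSucc) (A i.succ)) := by
      rw [Finset.sum_sub_distrib, ← Finset.mul_sum, ← hv', ← he']
      push_cast
      ring
    rw [main]
    calc ∑ i : Fin M, (((A i.succ \ A i.castSucc).card : ℝ)
            - α * eType ∅ ⊥ H (A i.castSucc) (A i.succ))
        ≤ ∑ _i : Fin M, (-ζ) := Finset.sum_le_sum (fun i _ => step i)
      _ = -(ζ * M) := by
          rw [Finset.sum_const, Finset.card_univ, Fintype.card_fin]
          push_cast
          ring
  refine ⟨part1, fun n => ?_⟩
  -- Part 2: the probability bound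
  rcases Nat.eq_zero_or_pos n with hn0 | hn1
  · subst hn0
    by_cases hW : Nonempty W
    · have hempty : ∀ G : SimpleGraph (Fin 0),
          ¬ (∃ f : W → Fin 0, Function.Injective f ∧
            ∀ x y, H.Adj x y → G.Adj (f x) (f y)) := by
        rintro G ⟨f, -, -⟩
        exact (f (Classical.arbitrary W)).elim0
      have : prob 0 ((0:ℝ) ^ (-α)) (fun G => ∃ f : W → Fin 0, Function.Injective f ∧
          ∀ x y, H.Adj x y → G.Adj (f x) (f y)) = 0 := by
        unfold prob
        refine Finset.sum_eq_zero fun E _ => ?_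
        rw [if_neg (hempty _)]
      rw [Nat.cast_zero, this]
      exact Real.rpow_nonneg (le_refl 0) _
    · have hM : M = 0 := by
        by_contra hM
        have hMpos : 0 < M := Nat.pos_of_ne_zero hM
        have := hchain ⟨0, hMpos⟩
        have huniv : (Finset.univ : Finset W) = ∅ := by
          rw [Finset.univ_eq_empty_iff]
          exact not_nonempty_iff.1 hW
        have h1 : A (⟨0, hMpos⟩ : Fin M).succ ⊆ ∅ := huniv ▸ Finset.subset_univ _
        have h2 := this.2
        exact h2 (Finset.subset_empty.1 h1 ▸ Finset.empty_subset _)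
      subst hM
      have hp0 : (0:ℝ) ≤ (0:ℕ) ^ (-α) := Real.rpow_nonneg (by norm_num) _
      have hp1 : ((0:ℕ):ℝ) ^ (-α) ≤ 1 := by
        rw [Nat.cast_zero, Real.zero_rpow (by linarith : -α ≠ 0)]
        norm_num
      have := prob_le_one10 0 (((0:ℕ):ℝ) ^ (-α)) (by exact_mod_cast hp0) hp1
        (fun G => ∃ f : W → Fin 0, Function.Injective f ∧
          ∀ x y, H.Adj x y → G.Adj (f x) (f y))
      calc _ ≤ (1:ℝ) := this
        _ = ((0:ℕ):ℝ) ^ (-(ζ * (0:ℕ))) := by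
            rw [Nat.cast_zero, mul_zero, neg_zero, Real.rpow_zero]
  · -- n ≥ 1
    have hnpos : (0:ℝ) < n := by exact_mod_cast hn1
    have hn1' : (1:ℝ) ≤ n := by exact_mod_cast hn1
    set p : ℝ := (n:ℝ) ^ (-α) with hp
    have hp0 : 0 ≤ p := Real.rpow_nonneg hnpos.le _
    have hp1 : p ≤ 1 := Real.rpow_le_one_of_one_le_of_nonpos hn1' (by linarith)
    set e := H.edgeFinset.card with hee
    set T : Finset (W → Fin n) :=
      Finset.univ.filter (fun f : W → Fin n => Function.Injective f) with hT
    set FF : (W → Fin n) → Finset (Sym2 (Fin n)) :=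
      fun f => H.edgeFinset.image (Sym2.map f) with hFF
    have hFFsub : ∀ f ∈ T, FF f ⊆ allEdges n := by
      intro f hf q hq
      rw [hT, Finset.mem_filter] at hf
      obtain ⟨r, hr, rfl⟩ := Finset.mem_image.1 hq
      rw [SimpleGraph.mem_edgeFinset] at hr
      induction r with
      | _ x y =>
        rw [SimpleGraph.mem_edgeSet] at hr
        simp only [allEdges, Finset.mem_filter, Finset.mem_univ, true_and, Sym2.map_pair_eq]
        rw [Sym2.mk_isDiag_iff]
        exact fun hxy => hr.ne (hf.2 hxy)
    have key : prob n p (fun G => ∃ f : W → Fin n, Function.Injective f ∧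
        ∀ x y, H.Adj x y → G.Adj (f x) (f y)) ≤ ∑ _f ∈ T, p ^ e := by
      have step2 : ∑ E ∈ (allEdges n).powerset, ∑ f ∈ T,
          (if FF f ⊆ E then p ^ E.card * (1 - p) ^ ((allEdges n).card - E.card) else 0)
          = ∑ _f ∈ T, p ^ e := by
        rw [Finset.sum_comm]
        refine Finset.sum_congr rfl fun f hf => ?_
        rw [sum_subset_indicator10 (allEdges n) (FF f) (hFFsub f hf) p]
        rw [hT, Finset.mem_filter] at hf
        rw [hFF]
        rw [Finset.card_image_of_injective _ (Sym2.map.injective hf.2)]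
      refine le_trans ?_ (le_of_eq step2)
      unfold prob
      refine Finset.sum_le_sum fun E _ => ?_
      have hw : (0:ℝ) ≤ p ^ E.card * (1 - p) ^ ((allEdges n).card - E.card) := by
        have : (0:ℝ) ≤ 1 - p := by linarith
        positivity
      split
      · rename_i hA
        obtain ⟨f, hfinj, hfhom⟩ := hA
        have hfT : f ∈ T := by rw [hT, Finset.mem_filter]; exact ⟨Finset.mem_univ _, hfinj⟩
        have hsubE : FF f ⊆ E := by
          intro q hq
          obtain ⟨r, hr, rfl⟩ := Finset.mem_image.1 hq
          rw [SimpleGraph.mem_edgeFinset] at hr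
          induction r with
          | _ x y =>
            rw [SimpleGraph.mem_edgeSet] at hr
            have := hfhom x y hr
            rw [SimpleGraph.fromEdgeSet_adj] at this
            rw [Sym2.map_pair_eq]
            exact_mod_cast this.1
        have hsingle := Finset.single_le_sum (f := fun g =>
            if FF g ⊆ E then p ^ E.card * (1 - p) ^ ((allEdges n).card - E.card) else 0)
          (fun g _ => by
            split
            · exact hw
            · exact le_refl 0) hfT
        rw [if_pos hsubE] at hsingle
        exact hsingle
      · refine Finset.sum_nonneg fun g _ => ?_
        split
        · exact hw
        · exact le_refl 0
    have card_bound : (T.card : ℝ) ≤ (n:ℝ) ^ (Fintype.card W) := by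
      have h1 : T.card ≤ Fintype.card (W → Fin n) := by
        rw [← Finset.card_univ]
        exact Finset.card_filter_le _ _
      have h2 : Fintype.card (W → Fin n) = n ^ (Fintype.card W) := by
        rw [Fintype.card_fun, Fintype.card_fin]
      calc (T.card : ℝ) ≤ (Fintype.card (W → Fin n) : ℝ) := by exact_mod_cast h1
        _ = (n:ℝ) ^ (Fintype.card W) := by rw [h2]; push_cast; ring
    calc prob n ((n:ℝ) ^ (-α)) _ ≤ ∑ _f ∈ T, p ^ e := key
      _ = (T.card : ℝ) * p ^ e := by rw [Finset.sum_const, nsmul_eq_mul]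
      _ ≤ (n:ℝ) ^ (Fintype.card W) * p ^ e := by
          refine mul_le_mul_of_nonneg_right card_bound (by positivity)
      _ = (n:ℝ) ^ (((Fintype.card W : ℝ)) - α * e) := by
          rw [hp, ← Real.rpow_natCast ((n:ℝ) ^ (-α)) e, ← Real.rpow_mul hnpos.le,
            ← Real.rpow_natCast (n:ℝ) (Fintype.card W), ← Real.rpow_add hnpos]
          ring_nf
      _ ≤ (n:ℝ) ^ (-(ζ * M)) := Real.rpow_le_rpow_of_exponent_le hn1' part1

end RandomGraphPaper
end
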